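/- Every finite nonempty subset of an infinite abelian group G is a minimal complement in G, i.e., there exists a subset W ⊆ G such that W + C = G and no proper subset of C is a complement for W. -/

import Mathlib

open Pointwise

/-- Auxiliary: in an infinite group, any finite set admits a family of points whose
pairwise differences avoid a given finite set. -/
theorem exists_separated_family {G : Type*} [AddCommGroup G] [Infinite G]
    (D : Set G) (hD : D.Finite) (S : Set G) (hS : S.Finite) :
    ∃ p : G → G, ∀ c ∈ S, ∀ d ∈ S, c ≠ d → p c - p d ∉ D := by
  classical
  refine Set.Finite.induction_on (motive := fun S _ => ∃ p : G → G, ∀ c ∈ S, ∀ d ∈ S, c ≠ d → p c - p d ∉ D) S hS ?_ ?_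
  · exact ⟨fun _ => 0, fun c hc => absurd hc (Set.notMem_empty c)⟩
  · intro a s ha hs ih
    obtain ⟨p, hp⟩ := ih
    have hF : (((p '' s) + D) ∪ ((p '' s) - D)).Finite :=
      (((hs.image p).add hD).union ((hs.image p).sub hD))
    obtain ⟨v, hv⟩ := hF.infinite_compl.nonempty
    have hv1 : ∀ d ∈ s, v - p d ∉ D := by
      intro d hd hmem
      exact hv (Or.inl ⟨p d, Set.mem_image_of_mem p hd, v - p d, hmem, by simp⟩)
    have hv2 : ∀ d ∈ s, p d - v ∉ D := by
      intro d hd hmem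
      exact hv (Or.inr ⟨p d, Set.mem_image_of_mem p hd, p d - v, hmem, by simp⟩)
    refine ⟨Function.update p a v, ?_⟩
    intro c hc d hd hcd
    rcases hc with rfl | hc <;> rcases hd with rfl | hd
    · exact absurd rfl hcd
    · rw [Function.update_self, Function.update_of_ne (ne_of_mem_of_not_mem hd ha)]
      exact hv1 d hd
    · rw [Function.update_self, Function.update_of_ne (ne_of_mem_of_not_mem hc ha)]
      exact hv2 c hc
    · rw [Function.update_of_ne (ne_of_mem_of_not_mem hc ha),
        Function.update_of_ne (ne_of_mem_of_not_mem hd ha)]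
      exact hp c hc d hd hcd

/-- Every finite nonempty subset of an infinite abelian group is a minimal complement. -/
theorem finite_subset_is_minimal_complement {G : Type*} [AddCommGroup G] [Infinite G]
    (C : Set G) (hfin : C.Finite) (hne : C.Nonempty) :
    ∃ W : Set G, W + C = Set.univ ∧ ∀ C' : Set G, C' ⊂ C → W + C' ≠ Set.univ := by
  classical
  obtain ⟨c₀, hc₀⟩ := hne
  set D : Set G := (C - C) + (C - C) with hDdef
  have hDfin : D.Finite := (hfin.sub hfin).add (hfin.sub hfin)
  have hsubD : ∀ x ∈ C, ∀ y ∈ C, x - y ∈ D := by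
    intro x hx y hy
    exact ⟨x - y, ⟨x, hx, y, hy, rfl⟩, c₀ - c₀, ⟨c₀, hc₀, c₀, hc₀, rfl⟩, by abel⟩
  obtain ⟨p, hp⟩ := exists_separated_family D hDfin C hfin
  -- the bad set
  set B : Set G := {x | ∃ c ∈ C, ∃ e ∈ C, e ≠ c ∧ x = p c - e} with hBdef
  -- key: every g can be covered while avoiding B
  have key : ∀ g : G, ∃ c ∈ C, g - c ∉ B := by
    intro g
    by_contra hcon
    push_neg at hcon
    have h' : ∀ c ∈ C, ∃ d ∈ C, ∃ e ∈ C, e ≠ d ∧ g - c = p d - e := fun c hc => hcon c hc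
    choose d hd e he hed heq using h'
    -- d is constant on C
    have hconst : ∀ c (hc : c ∈ C), d c hc = d c₀ hc₀ := by
      intro c hc
      by_contra hne'
      apply hp (d c hc) (hd c hc) (d c₀ hc₀) (hd c₀ hc₀) hne'
      have h1 := heq c hc
      have h2 := heq c₀ hc₀
      have : p (d c hc) - p (d c₀ hc₀) = (e c hc - c) + (c₀ - e c₀ hc₀) := by
        have : p (d c hc) = g - c + e c hc := by rw [h1]; abel
        have h2' : p (d c₀ hc₀) = g - c₀ + e c₀ hc₀ := by rw [h2]; abel
        rw [this, h2']; abel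
      rw [this]
      exact ⟨e c hc - c, ⟨e c hc, he c hc, c, hc, rfl⟩,
        c₀ - e c₀ hc₀, ⟨c₀, hc₀, e c₀ hc₀, he c₀ hc₀, rfl⟩, rfl⟩
    set d₀ := d c₀ hc₀ with hd₀
    -- the map c ↦ c - (g - p d₀) injects C into C \ {d₀}
    set t := g - p d₀ with ht
    have himg : ∀ c (hc : c ∈ C), c - t ∈ C \ {d₀} := by
      intro c hc
      have h1 := heq c hc
      rw [hconst c hc] at h1
      have hct : c - t = e c hc := by
        have h2 : p d₀ - (g - c) = e c hc := by rw [h1]; abel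
        rw [← h2, ht]; abel
      rw [hct]
      refine ⟨he c hc, ?_⟩
      simp only [Set.mem_singleton_iff]
      have := hed c hc
      rw [hconst c hc] at this
      exact this
    -- cardinality contradiction
    have hinj : Set.InjOn (fun c => c - t) C := fun x _ y _ hxy => by
      simpa using sub_left_injective hxy
    have hsub : (fun c => c - t) '' C ⊆ C \ {d₀} := by
      rintro x ⟨c, hc, rfl⟩
      exact himg c hc
    have h1 : ((fun c => c - t) '' C).ncard = C.ncard := Set.ncard_image_of_injOn hinj
    have h2 : ((fun c => c - t) '' C).ncard ≤ (C \ {d₀}).ncard :=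
      Set.ncard_le_ncard hsub hfin.diff
    have h3 : (C \ {d₀}).ncard < C.ncard :=
      Set.ncard_diff_singleton_lt_of_mem (hd c₀ hc₀) hfin
    omega
  choose cg hcg1 hcg2 using key
  set W : Set G := ((fun c => p c - c) '' C) ∪ (Set.range fun g => g - cg g) with hWdef
  have hWB : ∀ w ∈ W, w ∉ B := by
    rintro w (⟨c, hc, rfl⟩ | ⟨g, rfl⟩)
    · rintro ⟨dd, hdd, ee, hee, heed, heq'⟩
      by_cases hcd : c = dd
      · subst hcd
        have hce : c = ee := sub_right_injective heq'
        exact heed hce.symm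
      · apply hp dd hdd c hc (fun h => hcd h.symm)
        have : p dd - p c = ee - c := by
          have : p c - c = p dd - ee := heq'
          have h' : p dd = p c - c + ee := by rw [this]; abel
          rw [h']; abel
        rw [this]
        exact hsubD ee hee c hc
    · exact hcg2 g
  refine ⟨W, ?_, ?_⟩
  · ext g
    simp only [Set.mem_univ, iff_true]
    exact Set.mem_add.mpr ⟨g - cg g, Or.inr ⟨g, rfl⟩, cg g, hcg1 g, by abel⟩
  · intro C' hC' hcontra
    obtain ⟨c, hcC, hcC'⟩ := Set.exists_of_ssubset hC'
    have hmem : p c ∈ W + C' := hcontra ▸ Set.mem_univ _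
    obtain ⟨w, hw, c', hc', hwc'⟩ := Set.mem_add.mp hmem
    apply hWB w hw
    exact ⟨c, hcC, c', hC'.1 hc', fun h => hcC' (h ▸ hc'),
      by rw [← hwc']; abel⟩
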